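/- Let M be a simple U(L)-module that is free of rank 1 over U(B) with basis v, where B = ℂL₀⊕ℂa₀. Writing c_n v = C_n(L₀,a₀)v and b_n v = B_n(L₀,a₀)v, the polynomial C_n is a constant (lies in ℂ) for every n ∈ ℤ; moreover C_n = λ^n C₀ for some λ ∈ ℂ*, and if C₀ = 0 then M is not simple (a contradiction), so C₀ ≠ 0. -/

import Mathlib

/- STATEMENT 15: for a simple `U(L)`-module `M` free of rank 1 over `U(B)` with basis `v`, writing `c_n v = C_n(L₀,a₀) v` (where `C_n ∈ ℂ[u₀,u₁] ≅ U(B)` is obtained from freeness), each `C_n` is a constant polynomial, `C_n = λ^n C₀` for some `λ ∈ ℂ*`, and `C₀ ≠ 0`. -/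

noncomputable section

/-- `p(L₀, a₀) v` for `p ∈ ℂ[u₀,u₁] ≅ U(B)`. -/
noncomputable def evUB {M : Type*} [AddCommGroup M] [Module ℂ M]
    (L0 A0 : Module.End ℂ M) (p : MvPolynomial (Fin 2) ℂ) (v : M) : M :=
  ∑ mo ∈ p.support, p.coeff mo • ((L0 ^ (mo 0)) ((A0 ^ (mo 1)) v))

open Polynomial

namespace CnAux



/-- shift as an algebra hom -/
noncomputable def Tau (m : ℂ) : Polynomial ℂ →ₐ[ℂ] Polynomial ℂ := aeval (X - C m)

lemma Tau_apply (m : ℂ) (p : ℂ[X]) : Tau m p = p.comp (X - C m) := by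
  simp [Tau, comp_eq_aeval]

lemma Tau_Tau (a b : ℂ) (p : ℂ[X]) : Tau a (Tau b p) = Tau (a + b) p := by
  simp only [Tau_apply, comp_assoc]
  congr 1
  simp only [sub_comp, X_comp, C_comp, C_add]
  ring

lemma Tau_zero_apply (p : ℂ[X]) : Tau 0 p = p := by
  simp [Tau_apply]

lemma Tau_XsubC_pow (m b : ℂ) (k : ℕ) : Tau m ((X - C b) ^ k) = (X - C (b + m)) ^ k := by
  simp only [map_pow, map_sub, Tau, aeval_X, aeval_C, C_add, Polynomial.algebraMap_eq]
  ring_nf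

lemma Tau_ne_zero {p : ℂ[X]} (m : ℂ) (hp : p ≠ 0) : Tau m p ≠ 0 := by
  intro h
  apply hp
  have := congrArg (Tau (-m)) h
  rwa [Tau_Tau, neg_add_cancel, Tau_zero_apply, map_zero] at this

lemma rootMultiplicity_Tau {p : ℂ[X]} (hp : p ≠ 0) (m a : ℂ) :
    rootMultiplicity a (Tau m p) = rootMultiplicity (a - m) p := by
  apply le_antisymm
  · rw [le_rootMultiplicity_iff hp]
    have h1 : (X - C a) ^ rootMultiplicity a (Tau m p) ∣ Tau m p :=
      (le_rootMultiplicity_iff (Tau_ne_zero m hp)).mp le_rfl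
    have h2 := map_dvd (Tau (-m)) h1
    rw [Tau_Tau, neg_add_cancel, Tau_zero_apply, Tau_XsubC_pow] at h2
    rw [show a - m = a + -m by ring]
    exact h2
  · rw [le_rootMultiplicity_iff (Tau_ne_zero m hp)]
    have h1 : (X - C (a - m)) ^ rootMultiplicity (a - m) p ∣ p :=
      (le_rootMultiplicity_iff hp).mp le_rfl
    have h2 := map_dvd (Tau m) h1
    rw [Tau_XsubC_pow, show a - m + m = a by ring] at h2
    exact h2

lemma roots_Tau {p : ℂ[X]} (hp : p ≠ 0) (m : ℂ) :
    (Tau m p).roots = p.roots.map (· + m) := by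
  classical
  ext a
  rw [count_roots, rootMultiplicity_Tau hp]
  have hinj : Function.Injective (fun x : ℂ => x + m) := fun x y h => by simpa using h
  have hc := Multiset.count_map_eq_count' (fun x : ℂ => x + m) p.roots hinj (a - m)
  have ha : a - m + m = a := by ring
  simp only [ha] at hc
  rw [hc, count_roots]

lemma card_roots_eq {p : ℂ[X]} (hp : p ≠ 0) :
    Multiset.card p.roots = p.natDegree :=
  splits_iff_card_roots.mp (IsAlgClosed.splits p)

lemma sum_map_add_const (s : Multiset ℂ) (m : ℂ) :
    (s.map (· + m)).sum = s.sum + (Multiset.card s : ℂ) * m := by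
  induction s using Multiset.induction_on with
  | empty => simp
  | cons a s ih =>
      simp only [Multiset.map_cons, Multiset.sum_cons, ih, Multiset.card_cons]
      push_cast
      ring

lemma sum_roots_Tau {p : ℂ[X]} (hp : p ≠ 0) (m : ℂ) :
    (Tau m p).roots.sum = p.roots.sum + (p.natDegree : ℂ) * m := by
  rw [roots_Tau hp, sum_map_add_const, card_roots_eq hp]

/-- P6 -/
lemma natDegree_eq_zero_of_commrel (γ : ℤ → ℂ[X]) (h0 : ∀ n, γ n ≠ 0)
    (hrel : ∀ m n : ℤ, Tau (m:ℂ) (γ n) * γ m = Tau (n:ℂ) (γ m) * γ n) :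
    ∀ n, (γ n).natDegree = 0 := by
  have key : ∀ m n : ℤ, ((γ n).natDegree : ℂ) * m = ((γ m).natDegree : ℂ) * n := by
    intro m n
    have hL : Tau (m:ℂ) (γ n) * γ m ≠ 0 :=
      mul_ne_zero (Tau_ne_zero _ (h0 n)) (h0 m)
    have hR : Tau (n:ℂ) (γ m) * γ n ≠ 0 :=
      mul_ne_zero (Tau_ne_zero _ (h0 m)) (h0 n)
    have := congrArg (fun q : ℂ[X] => q.roots.sum) (hrel m n)
    simp only [roots_mul hL, roots_mul hR, Multiset.sum_add] at this
    rw [sum_roots_Tau (h0 n), sum_roots_Tau (h0 m)] at this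
    linear_combination this
  have hd1 : (γ 1).natDegree = 0 := by
    have hm1 : ((γ (-1)).natDegree : ℂ) = ((γ 1).natDegree : ℂ) * (-1) := by
      have := key 1 (-1)
      push_cast at this ⊢
      linear_combination this
    have h3 : (((γ (-1)).natDegree + (γ 1).natDegree : ℕ) : ℂ) = 0 := by
      push_cast
      linear_combination hm1
    have h4 : (γ (-1)).natDegree + (γ 1).natDegree = 0 := by exact_mod_cast h3
    omega
  intro n
  have h1 : ((γ n).natDegree : ℂ) = ((γ 1).natDegree : ℂ) * n := by
    have := key 1 n
    push_cast at this ⊢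
    linear_combination this
  have h2 : ((γ n).natDegree : ℂ) = 0 := by
    rw [h1, hd1]
    push_cast
    ring
  exact_mod_cast h2

/-- P7: periodic implies constant -/
lemma exists_C_of_periodic (q : ℂ[X]) (h : Tau 1 q = q) : ∃ c, q = C c := by
  have he : ∀ x : ℂ, eval (x - 1) q = eval x q := by
    intro x
    conv_rhs => rw [← h]
    rw [Tau_apply, eval_comp]
    simp
  have hk : ∀ k : ℕ, eval (-(k:ℂ)) q = eval 0 q := by
    intro k
    induction k with
    | zero => simp
    | succ k ih =>
        have := he (-(k:ℂ))
        push_cast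
        rw [show -((k:ℂ) + 1) = -(k:ℂ) - 1 by ring, this, ih]
  have hinf : {x | (q - C (eval 0 q)).IsRoot x}.Infinite := by
    apply Set.infinite_of_injective_forall_mem (f := fun k : ℕ => -(k:ℂ))
    · intro a b hab
      simpa [neg_inj, Nat.cast_inj] using hab
    · intro k
      simp [IsRoot, hk k]
  have h0 : q - C (eval 0 q) = 0 := eq_zero_of_infinite_isRoot _ hinf
  exact ⟨eval 0 q, by linear_combination h0⟩



/-- P1: monomial structure from Euler-type equation -/
lemma monomial_of_euler {S : Type*} [CommRing S] [IsDomain S] [CharZero S]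
    (A G : S[X]) (hA : A ≠ 0) (h : A * (G + 1) = X * derivative A) :
    ∃ (f : ℕ) (a : S), a ≠ 0 ∧ A = C a * X ^ f ∧ G + 1 = C (f : S) := by
  by_cases hG : G + 1 = 0
  · rw [hG, mul_zero] at h
    have hd : derivative A = 0 := by
      rcases mul_eq_zero.mp h.symm with h1 | h1
      · exact absurd h1 X_ne_zero
      · exact h1
    have hdeg : A.natDegree = 0 := natDegree_eq_zero_of_derivative_eq_zero hd
    refine ⟨0, A.coeff 0, ?_, ?_, ?_⟩
    · intro h0
      apply hA
      rw [eq_C_of_natDegree_eq_zero hdeg, h0, map_zero]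
    · rw [pow_zero, mul_one]
      exact eq_C_of_natDegree_eq_zero hdeg
    · rw [hG]
      simp
  · have hd : derivative A ≠ 0 := by
      intro h0
      rw [h0, mul_zero] at h
      exact mul_ne_zero hA hG h
    have hdegG : (G + 1).natDegree = 0 := by
      have h1 : A.natDegree + (G + 1).natDegree = (X * derivative A).natDegree := by
        rw [← natDegree_mul hA hG, h]
      have h2 : (X * derivative A).natDegree = 1 + (derivative A).natDegree := by
        rw [natDegree_mul X_ne_zero hd, natDegree_X]
      have h3 : (derivative A).natDegree < A.natDegree := by
        apply natDegree_derivative_lt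
        intro h0
        exact hd (by rw [eq_C_of_natDegree_eq_zero h0]; simp)
      omega
    set g : S := (G + 1).coeff 0 with hgdef
    have hGC : G + 1 = C g := eq_C_of_natDegree_eq_zero hdegG
    have hgne : g ≠ 0 := by
      intro h0
      rw [h0, map_zero] at hGC
      exact hG hGC
    have hcoeff : ∀ j : ℕ, A.coeff j ≠ 0 → g = (j : S) := by
      intro j hj
      have hcj := congrArg (fun q : S[X] => q.coeff j) h
      simp only [hGC, coeff_mul_C] at hcj
      match j with
      | 0 =>
          exfalso
          have h0' : (X * derivative A).coeff 0 = 0 := by simp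
          rw [h0'] at hcj
          exact hj (by
            rcases mul_eq_zero.mp hcj with h1 | h1
            · exact h1
            · exact absurd h1 hgne)
      | (k+1) =>
          rw [coeff_X_mul, coeff_derivative] at hcj
          have h4 : A.coeff (k+1) * (g - ((k:S) + 1)) = 0 := by linear_combination hcj
          rcases mul_eq_zero.mp h4 with h1 | h1
          · exact absurd h1 hj
          · push_cast
            linear_combination h1
    have hlead : A.coeff A.natDegree ≠ 0 := by
      rw [← leadingCoeff]
      exact leadingCoeff_ne_zero.mpr hA
    refine ⟨A.natDegree, A.coeff A.natDegree, hlead, ?_, ?_⟩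
    · ext j
      rw [coeff_C_mul, coeff_X_pow]
      by_cases hj : j = A.natDegree
      · simp [hj]
      · simp only [hj, if_false, mul_zero]
        by_contra hne
        have := hcoeff j hne
        have h2 := hcoeff A.natDegree hlead
        rw [this] at h2
        exact hj (by exact_mod_cast h2)
    · rw [hGC, hcoeff A.natDegree hlead]

/-- shift on the big ring -/
noncomputable def Sh (m : ℂ) : Polynomial (Polynomial ℂ) →ₐ[ℂ] Polynomial (Polynomial ℂ) :=
  Polynomial.mapAlgHom (Tau m)

lemma Sh_apply (m : ℂ) (p : Polynomial (Polynomial ℂ)) : Sh m p = p.map (Tau m).toRingHom := rfl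

lemma Sh_C (m : ℂ) (q : ℂ[X]) : Sh m (C q) = C (Tau m q) := by
  simp [Sh_apply]

lemma Sh_X (m : ℂ) : Sh m (X : Polynomial (Polynomial ℂ)) = X := by
  simp [Sh_apply]

lemma Sh_Sh (a b : ℂ) (p : Polynomial (Polynomial ℂ)) : Sh a (Sh b p) = Sh (a + b) p := by
  rw [Sh_apply, Sh_apply, Polynomial.map_map, Sh_apply]
  congr 1
  exact RingHom.ext fun q => Tau_Tau a b q

lemma Sh_zero_apply (p : Polynomial (Polynomial ℂ)) : Sh 0 p = p := by
  rw [Sh_apply]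
  have : (Tau 0).toRingHom = RingHom.id ℂ[X] := RingHom.ext fun q => Tau_zero_apply q
  rw [this, Polynomial.map_id]

lemma Sh_injective (m : ℂ) : Function.Injective (Sh m) := by
  intro p q h
  have := congrArg (Sh (-m)) h
  rwa [Sh_Sh, Sh_Sh, neg_add_cancel, Sh_zero_apply, Sh_zero_apply] at this

/-- the isomorphism ℂ[u₀,u₁] ≃ (ℂ[X])[X], with u₁ ↦ outer X, u₀ ↦ C X -/
noncomputable def e3 : MvPolynomial (Fin 1) ℂ ≃ₐ[ℂ] ℂ[X] :=
  (MvPolynomial.renameEquiv ℂ (Equiv.equivPUnit.{1, 1} (Fin 1))).trans (MvPolynomial.pUnitAlgEquiv ℂ)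

lemma e3_X (i : Fin 1) : e3 (MvPolynomial.X i) = X := by
  simp [e3]

lemma mapAlgEquiv_apply (e : MvPolynomial (Fin 1) ℂ ≃ₐ[ℂ] ℂ[X]) (p : Polynomial (MvPolynomial (Fin 1) ℂ)) :
    (Polynomial.mapAlgEquiv e) p = p.map (e : MvPolynomial (Fin 1) ℂ →+* ℂ[X]) := rfl

noncomputable def Theta : MvPolynomial (Fin 2) ℂ ≃ₐ[ℂ] Polynomial (Polynomial ℂ) :=
  ((MvPolynomial.renameEquiv ℂ (Equiv.swap 0 1)).trans (MvPolynomial.finSuccEquiv ℂ 1)).trans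
    (Polynomial.mapAlgEquiv e3)

lemma Theta_X1 : Theta (MvPolynomial.X 1) = X := by
  simp only [Theta, AlgEquiv.trans_apply, MvPolynomial.renameEquiv_apply, MvPolynomial.rename_X]
  rw [show (Equiv.swap (0 : Fin 2) 1) 1 = 0 by decide]
  rw [MvPolynomial.finSuccEquiv_X_zero, mapAlgEquiv_apply, Polynomial.map_X]

lemma Theta_X0 : Theta (MvPolynomial.X 0) = C X := by
  simp only [Theta, AlgEquiv.trans_apply, MvPolynomial.renameEquiv_apply, MvPolynomial.rename_X]
  rw [show (Equiv.swap (0 : Fin 2) 1) 0 = 1 by decide]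
  rw [show (1 : Fin 2) = Fin.succ 0 from rfl, MvPolynomial.finSuccEquiv_X_succ]
  rw [mapAlgEquiv_apply, Polynomial.map_C]
  rw [show ((e3 : MvPolynomial (Fin 1) ℂ →+* ℂ[X]) (MvPolynomial.X 0)) = e3 (MvPolynomial.X 0) from rfl, e3_X]

lemma Theta_C (c : ℂ) : Theta (MvPolynomial.C c) = C (C c) := by
  have : (MvPolynomial.C c : MvPolynomial (Fin 2) ℂ) = algebraMap ℂ _ c := rfl
  rw [this, AlgEquiv.commutes]
  rfl



/-- the shift substitution on MvPolynomial -/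
noncomputable def sg (z : ℂ) : MvPolynomial (Fin 2) ℂ →ₐ[ℂ] MvPolynomial (Fin 2) ℂ :=
  MvPolynomial.aeval ![MvPolynomial.X 0 - MvPolynomial.C z, MvPolynomial.X 1]

lemma sg_X0 (z : ℂ) : sg z (MvPolynomial.X 0) = MvPolynomial.X 0 - MvPolynomial.C z := by
  simp [sg]

lemma sg_X1 (z : ℂ) : sg z (MvPolynomial.X 1) = MvPolynomial.X 1 := by
  simp [sg]

lemma sg_C (z c : ℂ) : sg z (MvPolynomial.C c) = MvPolynomial.C c := by
  simp [sg, MvPolynomial.algebraMap_eq]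

/-- transport of the shift -/
lemma Theta_sg (z : ℂ) (p : MvPolynomial (Fin 2) ℂ) : Theta (sg z p) = Sh z (Theta p) := by
  have h : (Theta.toAlgHom.comp (sg z)) = ((Sh z).comp Theta.toAlgHom) := by
    apply MvPolynomial.algHom_ext
    intro i
    fin_cases i
    · show Theta (sg z (MvPolynomial.X 0)) = Sh z (Theta (MvPolynomial.X 0))
      rw [sg_X0, map_sub, Theta_X0, Theta_C, Sh_C]
      rw [show Tau z X = X - C z by rw [Tau_apply]; simp]
      rw [map_sub]
    · show Theta (sg z (MvPolynomial.X 1)) = Sh z (Theta (MvPolynomial.X 1))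
      rw [sg_X1, Theta_X1, Sh_X]
  exact DFunLike.congr_fun h p

/-- transport of the partial derivative -/
lemma Theta_pderiv (p : MvPolynomial (Fin 2) ℂ) :
    Theta (MvPolynomial.pderiv 1 p) = derivative (Theta p) := by
  induction p using MvPolynomial.induction_on with
  | C c => rw [MvPolynomial.pderiv_C, map_zero, Theta_C, derivative_C]
  | add p q hp hq => rw [map_add, map_add, map_add, derivative_add, hp, hq]
  | mul_X p i hp =>
      rw [MvPolynomial.pderiv_mul, map_add, map_mul, map_mul, map_mul, derivative_mul, hp]
      congr 1
      fin_cases i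
      · show Theta p * Theta (MvPolynomial.pderiv 1 (MvPolynomial.X 0)) =
          Theta p * derivative (Theta (MvPolynomial.X 0))
        rw [show MvPolynomial.pderiv (1 : Fin 2) (MvPolynomial.X (0 : Fin 2)) = 0 from
          MvPolynomial.pderiv_X_of_ne (by decide), map_zero, mul_zero, Theta_X0, derivative_C,
          mul_zero]
      · show Theta p * Theta (MvPolynomial.pderiv 1 (MvPolynomial.X 1)) =
          Theta p * derivative (Theta (MvPolynomial.X 1))
        rw [MvPolynomial.pderiv_X_self, map_one, mul_one, Theta_X1, derivative_X, mul_one]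
  

lemma Tau_C (m c : ℂ) : Tau m (Polynomial.C c) = Polynomial.C c := by
  simp [Tau]

lemma sg_zero_apply (p : MvPolynomial (Fin 2) ℂ) : sg 0 p = p := by
  have h : (sg 0) = (AlgHom.id ℂ (MvPolynomial (Fin 2) ℂ)) := by
    apply MvPolynomial.algHom_ext
    intro i
    fin_cases i
    · show sg 0 (MvPolynomial.X 0) = MvPolynomial.X 0
      rw [sg_X0]; simp
    · show sg 0 (MvPolynomial.X 1) = MvPolynomial.X 1
      rw [sg_X1]
  rw [h]; rfl

end CnAux

namespace CnAux

section ModuleSide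

variable {M : Type*} [AddCommGroup M] [Module ℂ M]

lemma evUB_eq_sum (L0 A0 : Module.End ℂ M) (v : M) (p : MvPolynomial (Fin 2) ℂ)
    (s : Finset (Fin 2 →₀ ℕ)) (hs : p.support ⊆ s) :
    evUB L0 A0 p v = ∑ mo ∈ s, p.coeff mo • ((L0 ^ (mo 0)) ((A0 ^ (mo 1)) v)) := by
  unfold evUB
  apply Finset.sum_subset hs
  intro mo _ hmo
  rw [MvPolynomial.notMem_support_iff.mp hmo, zero_smul]

lemma evUB_monomial (L0 A0 : Module.End ℂ M) (v : M) (mo : Fin 2 →₀ ℕ) (c : ℂ) :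
    evUB L0 A0 (MvPolynomial.monomial mo c) v = c • ((L0 ^ (mo 0)) ((A0 ^ (mo 1)) v)) := by
  classical
  unfold evUB
  by_cases hc : c = 0
  · simp [hc]
  · rw [MvPolynomial.support_monomial, if_neg hc, Finset.sum_singleton,
      MvPolynomial.coeff_monomial, if_pos rfl]

lemma evUB_add (L0 A0 : Module.End ℂ M) (v : M) (p q : MvPolynomial (Fin 2) ℂ) :
    evUB L0 A0 (p + q) v = evUB L0 A0 p v + evUB L0 A0 q v := by
  classical
  rw [evUB_eq_sum L0 A0 v (p + q) (p.support ∪ q.support) MvPolynomial.support_add,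
    evUB_eq_sum L0 A0 v p (p.support ∪ q.support) Finset.subset_union_left,
    evUB_eq_sum L0 A0 v q (p.support ∪ q.support) Finset.subset_union_right,
    ← Finset.sum_add_distrib]
  refine Finset.sum_congr rfl fun mo _ => ?_
  rw [MvPolynomial.coeff_add, add_smul]

lemma evUB_smul (L0 A0 : Module.End ℂ M) (v : M) (c : ℂ) (p : MvPolynomial (Fin 2) ℂ) :
    evUB L0 A0 (c • p) v = c • evUB L0 A0 p v := by
  rw [evUB_eq_sum L0 A0 v (c • p) p.support MvPolynomial.support_smul, evUB, Finset.smul_sum]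
  refine Finset.sum_congr rfl fun mo _ => ?_
  rw [MvPolynomial.coeff_smul, smul_smul, smul_eq_mul]

/-- the linear map `p ↦ p(L₀,a₀)v` -/
def phiL (L0 A0 : Module.End ℂ M) (v : M) : MvPolynomial (Fin 2) ℂ →ₗ[ℂ] M where
  toFun := fun p => evUB L0 A0 p v
  map_add' := fun p q => evUB_add L0 A0 v p q
  map_smul' := fun c p => evUB_smul L0 A0 v c p

variable (L0 A0 : Module.End ℂ M) (v : M)

lemma phiL_apply (p : MvPolynomial (Fin 2) ℂ) : phiL L0 A0 v p = evUB L0 A0 p v := rfl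

lemma phiL_C (a : ℂ) : phiL L0 A0 v (MvPolynomial.C a) = a • v := by
  rw [phiL_apply, show (MvPolynomial.C a : MvPolynomial (Fin 2) ℂ) = MvPolynomial.monomial 0 a from rfl,
    evUB_monomial]
  simp

lemma phiL_one : phiL L0 A0 v 1 = v := by
  rw [show (1 : MvPolynomial (Fin 2) ℂ) = MvPolynomial.C 1 from rfl, phiL_C, one_smul]

lemma phiL_X1 : phiL L0 A0 v (MvPolynomial.X 1) = A0 v := by
  rw [phiL_apply, show (MvPolynomial.X 1 : MvPolynomial (Fin 2) ℂ)
    = MvPolynomial.monomial (Finsupp.single 1 1) 1 from rfl, evUB_monomial]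
  simp

lemma phiL_smul (c : ℂ) (p : MvPolynomial (Fin 2) ℂ) :
    phiL L0 A0 v (MvPolynomial.C c * p) = c • phiL L0 A0 v p := by
  rw [MvPolynomial.C_mul', map_smul]

lemma phiL_X0_mul (p : MvPolynomial (Fin 2) ℂ) :
    phiL L0 A0 v (MvPolynomial.X 0 * p) = L0 (phiL L0 A0 v p) := by
  induction p using MvPolynomial.induction_on' with
  | add p q hp hq => rw [mul_add, map_add, hp, hq, ← map_add, ← map_add]
  | monomial mo c =>
      rw [show (MvPolynomial.X (0:Fin 2) : MvPolynomial (Fin 2) ℂ)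
          = MvPolynomial.monomial (Finsupp.single 0 1) (1:ℂ) from rfl,
        MvPolynomial.monomial_mul, one_mul, phiL_apply, phiL_apply,
        evUB_monomial, evUB_monomial, map_smul]
      congr 1
      have h0 : ((Finsupp.single (0:Fin 2) (1:ℕ) + mo) : Fin 2 →₀ ℕ) 0 = mo 0 + 1 := by
        rw [Finsupp.add_apply, Finsupp.single_eq_same]
        omega
      have h1 : ((Finsupp.single (0:Fin 2) (1:ℕ) + mo) : Fin 2 →₀ ℕ) 1 = mo 1 := by
        rw [Finsupp.add_apply, Finsupp.single_eq_of_ne (by decide)]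
        omega
      rw [h0, h1, pow_succ', Module.End.mul_apply]

lemma phiL_X1_mul (hc : A0 * L0 = L0 * A0) (p : MvPolynomial (Fin 2) ℂ) :
    phiL L0 A0 v (MvPolynomial.X 1 * p) = A0 (phiL L0 A0 v p) := by
  induction p using MvPolynomial.induction_on' with
  | add p q hp hq => rw [mul_add, map_add, hp, hq, ← map_add, ← map_add]
  | monomial mo c =>
      rw [show (MvPolynomial.X (1:Fin 2) : MvPolynomial (Fin 2) ℂ)
          = MvPolynomial.monomial (Finsupp.single 1 1) (1:ℂ) from rfl,
        MvPolynomial.monomial_mul, one_mul, phiL_apply, phiL_apply,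
        evUB_monomial, evUB_monomial, map_smul]
      congr 1
      have h0 : ((Finsupp.single (1:Fin 2) (1:ℕ) + mo) : Fin 2 →₀ ℕ) 0 = mo 0 := by
        rw [Finsupp.add_apply, Finsupp.single_eq_of_ne (by decide)]
        omega
      have h1 : ((Finsupp.single (1:Fin 2) (1:ℕ) + mo) : Fin 2 →₀ ℕ) 1 = mo 1 + 1 := by
        rw [Finsupp.add_apply, Finsupp.single_eq_same]
        omega
      rw [h0, h1]
      have hcom : A0 * L0 ^ (mo 0) = L0 ^ (mo 0) * A0 := Commute.pow_right hc (mo 0)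
      calc (L0 ^ (mo 0)) ((A0 ^ (mo 1 + 1)) v)
          = (L0 ^ (mo 0) * A0) ((A0 ^ (mo 1)) v) := by
            rw [Module.End.mul_apply, pow_succ', Module.End.mul_apply]
        _ = A0 ((L0 ^ (mo 0)) ((A0 ^ (mo 1)) v)) := by
            rw [← hcom, Module.End.mul_apply]

/-- Template 1: operators commuting with `a₀` and shifting `L₀`. -/
lemma template1 (hc : A0 * L0 = L0 * A0) (T : Module.End ℂ M) (z : ℂ)
    (t : MvPolynomial (Fin 2) ℂ) (ht : phiL L0 A0 v t = T v)
    (hTL : T * L0 = L0 * T - z • T) (hTA : T * A0 = A0 * T) :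
    ∀ p, T (phiL L0 A0 v p) = phiL L0 A0 v (sg z p * t) := by
  intro p
  induction p using MvPolynomial.induction_on with
  | C a =>
      rw [phiL_C, map_smul, sg_C,
        show (MvPolynomial.C a * t) = a • t from MvPolynomial.C_mul' , map_smul, ht]
  | add p q hp hq =>
      rw [map_add, map_add, hp, hq, ← map_add]
      congr 1
      rw [map_add]
      ring
  | mul_X p i hp =>
      fin_cases i
      · show T (phiL L0 A0 v (p * MvPolynomial.X 0)) = phiL L0 A0 v (sg z (p * MvPolynomial.X 0) * t)
        conv_lhs => rw [mul_comm p (MvPolynomial.X 0), phiL_X0_mul]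
        have h1 : T (L0 (phiL L0 A0 v p)) = L0 (T (phiL L0 A0 v p)) - z • T (phiL L0 A0 v p) := by
          have := congrArg (fun (f : Module.End ℂ M) => f (phiL L0 A0 v p)) hTL
          simpa using this
        rw [h1, hp]
        have h2 : sg z (p * MvPolynomial.X 0) * t
            = MvPolynomial.X 0 * (sg z p * t) - MvPolynomial.C z * (sg z p * t) := by
          rw [map_mul, sg_X0]
          ring
        rw [h2, map_sub, phiL_X0_mul, phiL_smul]
      · show T (phiL L0 A0 v (p * MvPolynomial.X 1)) = phiL L0 A0 v (sg z (p * MvPolynomial.X 1) * t)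
        conv_lhs => rw [mul_comm p (MvPolynomial.X 1), phiL_X1_mul L0 A0 v hc]
        have h1 : T (A0 (phiL L0 A0 v p)) = A0 (T (phiL L0 A0 v p)) := by
          have := congrArg (fun (f : Module.End ℂ M) => f (phiL L0 A0 v p)) hTA
          simpa using this
        rw [h1, hp]
        have h2 : sg z (p * MvPolynomial.X 1) * t = MvPolynomial.X 1 * (sg z p * t) := by
          rw [map_mul, sg_X1]
          ring
        rw [h2, phiL_X1_mul L0 A0 v hc]

/-- Template 2: operators with a correction term against `a₀`. -/
lemma template2 (hc : A0 * L0 = L0 * A0) (T S : Module.End ℂ M) (z : ℂ)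
    (t s : MvPolynomial (Fin 2) ℂ) (ht : phiL L0 A0 v t = T v) (hs : phiL L0 A0 v s = S v)
    (hTL : T * L0 = L0 * T - z • T) (hTA : T * A0 = A0 * T + S)
    (hSL : S * L0 = L0 * S - z • S) (hSA : S * A0 = A0 * S) :
    ∀ p, T (phiL L0 A0 v p)
      = phiL L0 A0 v (sg z p * t + MvPolynomial.pderiv 1 (sg z p) * s) := by
  intro p
  induction p using MvPolynomial.induction_on with
  | C a =>
      rw [phiL_C, map_smul, sg_C, MvPolynomial.pderiv_C, zero_mul, add_zero,
        show (MvPolynomial.C a * t) = a • t from MvPolynomial.C_mul', map_smul, ht]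
  | add p q hp hq =>
      rw [map_add, map_add, hp, hq, ← map_add]
      congr 1
      rw [map_add, map_add]
      ring
  | mul_X p i hp =>
      fin_cases i
      · show T (phiL L0 A0 v (p * MvPolynomial.X 0))
          = phiL L0 A0 v (sg z (p * MvPolynomial.X 0) * t
              + MvPolynomial.pderiv 1 (sg z (p * MvPolynomial.X 0)) * s)
        conv_lhs => rw [mul_comm p (MvPolynomial.X 0), phiL_X0_mul]
        have h1 : T (L0 (phiL L0 A0 v p)) = L0 (T (phiL L0 A0 v p)) - z • T (phiL L0 A0 v p) := by
          have := congrArg (fun (f : Module.End ℂ M) => f (phiL L0 A0 v p)) hTL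
          simpa using this
        rw [h1, hp]
        set w := sg z p * t + MvPolynomial.pderiv 1 (sg z p) * s with hw
        have h2 : sg z (p * MvPolynomial.X 0) * t
            + MvPolynomial.pderiv 1 (sg z (p * MvPolynomial.X 0)) * s
            = MvPolynomial.X 0 * w - MvPolynomial.C z * w := by
          rw [map_mul, sg_X0, MvPolynomial.pderiv_mul]
          rw [show MvPolynomial.pderiv (1 : Fin 2) (MvPolynomial.X (0:Fin 2) - MvPolynomial.C z)
            = 0 by rw [map_sub, MvPolynomial.pderiv_C, MvPolynomial.pderiv_X_of_ne (by decide)]; ring]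
          rw [hw]
          ring
        rw [h2, map_sub, phiL_X0_mul, phiL_smul]
      · show T (phiL L0 A0 v (p * MvPolynomial.X 1))
          = phiL L0 A0 v (sg z (p * MvPolynomial.X 1) * t
              + MvPolynomial.pderiv 1 (sg z (p * MvPolynomial.X 1)) * s)
        conv_lhs => rw [mul_comm p (MvPolynomial.X 1), phiL_X1_mul L0 A0 v hc]
        have h1 : T (A0 (phiL L0 A0 v p)) = A0 (T (phiL L0 A0 v p)) + S (phiL L0 A0 v p) := by
          have := congrArg (fun (f : Module.End ℂ M) => f (phiL L0 A0 v p)) hTA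
          simpa using this
        have hS := template1 L0 A0 v hc S z s hs hSL hSA p
        set w := sg z p * t + MvPolynomial.pderiv 1 (sg z p) * s with hw
        have h2 : sg z (p * MvPolynomial.X 1) * t
            + MvPolynomial.pderiv 1 (sg z (p * MvPolynomial.X 1)) * s
            = MvPolynomial.X 1 * w + sg z p * s := by
          rw [map_mul, sg_X1, MvPolynomial.pderiv_mul, MvPolynomial.pderiv_X_self, hw]
          ring
        rw [h1, hp, hS]
        conv_rhs => rw [h2, map_add, phiL_X1_mul L0 A0 v hc]


end ModuleSide

end CnAux


namespace CnAux  -- mult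

lemma mult_structure (α s : ℤ → ℂ) (hα : ∀ n, α n ≠ 0)
    (heq : ∀ m n : ℤ, α (m + n) = α n * α m + (n : ℂ) * α n * s m) :
    ∀ n, α n = (α 1) ^ n := by
  have key : ∀ m n k : ℤ, α k * ((α n + (k:ℂ) * s n) * (α m + ((n:ℂ) + (k:ℂ)) * s m))
      = α k * (α n * α m + (n:ℂ) * α n * s m + (k:ℂ) * s (m + n)) := by
    intro m n k
    have e1 : α (m + n + k) = α (n + k) * α m + ((n + k : ℤ) : ℂ) * α (n + k) * s m := by
      rw [show m + n + k = m + (n + k) by ring]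
      exact heq m (n + k)
    have e2 : α (m + n + k) = α k * α (m + n) + (k:ℂ) * α k * s (m + n) := heq (m + n) k
    have e3 : α (n + k) = α k * α n + (k:ℂ) * α k * s n := heq n k
    have e4 : α (m + n) = α n * α m + (n:ℂ) * α n * s m := heq m n
    push_cast at e1 e2 e3 e4 ⊢
    linear_combination -((α m + ((n:ℂ) + (k:ℂ)) * s m) * e3 + e1 - e2 - (α k) * e4)
  have hcancel : ∀ m n k : ℤ, (α n + (k:ℂ) * s n) * (α m + ((n:ℂ) + (k:ℂ)) * s m)
      = α n * α m + (n:ℂ) * α n * s m + (k:ℂ) * s (m + n) := fun m n k =>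
    mul_left_cancel₀ (hα k) (key m n k)
  have hss : ∀ m n : ℤ, s n * s m = 0 := by
    intro m n
    have k1 := hcancel m n 1
    have k2 := hcancel m n 2
    push_cast at k1 k2
    linear_combination k2 / 2 - k1
  have hs : ∀ n, s n = 0 := fun n => mul_self_eq_zero.mp (hss n n)
  have hmul : ∀ m n : ℤ, α (m + n) = α n * α m := by
    intro m n
    rw [heq m n, hs m]
    ring
  have h0 : α 0 = 1 := by
    have h := hmul 0 0
    rw [zero_add] at h
    exact (mul_left_cancel₀ (hα 0) (show α 0 * 1 = α 0 * α 0 by linear_combination h)).symm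
  have hinv : α (-1) = (α 1)⁻¹ := by
    have h := hmul 1 (-1)
    rw [show (1:ℤ) + -1 = 0 by ring, h0] at h
    exact eq_inv_of_mul_eq_one_left (by linear_combination -h)
  intro n
  induction n using Int.induction_on with
  | zero => rw [h0, zpow_zero]
  | succ k ih =>
      have h := hmul k 1
      rw [h, ih, zpow_add_one₀ (hα 1)]
      ring
  | pred k ih =>
      have h := hmul (-(k:ℤ)) (-1)
      rw [show -(k:ℤ) - 1 = -(k:ℤ) + -1 by ring, h, ih, hinv]
      rw [show (-(k:ℤ) + -1) = (-(k:ℤ)) - 1 by ring, zpow_sub_one₀ (hα 1)]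
      ring

end CnAux  -- mult


open CnAux in
theorem Cn_is_scalar
    {M : Type*} [AddCommGroup M] [Module ℂ M]
    (EL Ea Eb Ec Ed : ℤ → Module.End ℂ M)
    (hLL : ∀ m n : ℤ, EL m * EL n - EL n * EL m = ((n - m : ℤ) : ℂ) • EL (m + n))
    (hLa : ∀ m n : ℤ, EL m * Ea n - Ea n * EL m = (n : ℂ) • Ea (m + n))
    (hLb : ∀ m n : ℤ, EL m * Eb n - Eb n * EL m = (n : ℂ) • Eb (m + n))
    (hLc : ∀ m n : ℤ, EL m * Ec n - Ec n * EL m = (n : ℂ) • Ec (m + n))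
    (hLd : ∀ m n : ℤ, EL m * Ed n - Ed n * EL m = (n : ℂ) • Ed (m + n))
    (hab : ∀ m n : ℤ, Ea m * Eb n - Eb n * Ea m = Ec (m + n))
    (hda : ∀ m n : ℤ, Ed m * Ea n - Ea n * Ed m = Ea (m + n))
    (hdb : ∀ m n : ℤ, Ed m * Eb n - Eb n * Ed m = -Eb (m + n))
    (haa : ∀ m n : ℤ, Ea m * Ea n - Ea n * Ea m = 0)
    (hac : ∀ m n : ℤ, Ea m * Ec n - Ec n * Ea m = 0)
    (hbb : ∀ m n : ℤ, Eb m * Eb n - Eb n * Eb m = 0)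
    (hbc : ∀ m n : ℤ, Eb m * Ec n - Ec n * Eb m = 0)
    (hcc : ∀ m n : ℤ, Ec m * Ec n - Ec n * Ec m = 0)
    (hdc : ∀ m n : ℤ, Ed m * Ec n - Ec n * Ed m = 0)
    (hdd : ∀ m n : ℤ, Ed m * Ed n - Ed n * Ed m = 0)
    (hsimple : ∀ N : Submodule ℂ M,
      (∀ (n : ℤ), ∀ x ∈ N, EL n x ∈ N ∧ Ea n x ∈ N ∧ Eb n x ∈ N ∧
        Ec n x ∈ N ∧ Ed n x ∈ N) → N = ⊥ ∨ N = ⊤)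
    [Nontrivial M]
    (v : M)
    (hfree : Function.Bijective
      (fun p : MvPolynomial (Fin 2) ℂ => evUB (EL 0) (Ea 0) p v)) :
    (∀ n : ℤ, ∃ c : ℂ,
      Function.invFun (fun p : MvPolynomial (Fin 2) ℂ => evUB (EL 0) (Ea 0) p v) (Ec n v)
        = MvPolynomial.C c) ∧
    (∃ lam : ℂ, lam ≠ 0 ∧ ∀ n : ℤ,
      Function.invFun (fun p : MvPolynomial (Fin 2) ℂ => evUB (EL 0) (Ea 0) p v) (Ec n v)
        = (lam ^ n : ℂ) •
            Function.invFun (fun p : MvPolynomial (Fin 2) ℂ => evUB (EL 0) (Ea 0) p v)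
              (Ec 0 v)) ∧
    Function.invFun (fun p : MvPolynomial (Fin 2) ℂ => evUB (EL 0) (Ea 0) p v) (Ec 0 v)
      ≠ 0 := by
  classical
  -- commutativity of L₀ and a₀
  have hc : Ea 0 * EL 0 = EL 0 * Ea 0 := by
    have h := hLa 0 0
    simp only [Int.cast_zero, zero_smul, zero_add] at h
    exact (sub_eq_zero.mp h).symm
  set φ : MvPolynomial (Fin 2) ℂ →ₗ[ℂ] M := phiL (EL 0) (Ea 0) v with hφdef
  have hbij : Function.Bijective φ := hfree
  set Φ : MvPolynomial (Fin 2) ℂ ≃ₗ[ℂ] M := LinearEquiv.ofBijective φ hbij with hΦdef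
  set ψ : M →ₗ[ℂ] MvPolynomial (Fin 2) ℂ := (Φ.symm : M →ₗ[ℂ] MvPolynomial (Fin 2) ℂ) with hψdef
  have hφψ : ∀ x, φ (ψ x) = x := fun x => Φ.apply_symm_apply x
  have hψφ : ∀ p, ψ (φ p) = p := fun p => Φ.symm_apply_apply p
  have hinj : Function.Injective φ := hbij.injective
  -- polynomial symbols
  set Pp : ℤ → MvPolynomial (Fin 2) ℂ := fun n => ψ (EL n v) with hPpdef
  set Ap : ℤ → MvPolynomial (Fin 2) ℂ := fun n => ψ (Ea n v) with hApdef
  set Bp : ℤ → MvPolynomial (Fin 2) ℂ := fun n => ψ (Eb n v) with hBpdef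
  set Cp : ℤ → MvPolynomial (Fin 2) ℂ := fun n => ψ (Ec n v) with hCpdef
  set Dp : ℤ → MvPolynomial (Fin 2) ℂ := fun n => ψ (Ed n v) with hDpdef
  have htP : ∀ n, φ (Pp n) = EL n v := fun n => hφψ _
  have htA : ∀ n, φ (Ap n) = Ea n v := fun n => hφψ _
  have htB : ∀ n, φ (Bp n) = Eb n v := fun n => hφψ _
  have htC : ∀ n, φ (Cp n) = Ec n v := fun n => hφψ _
  have htD : ∀ n, φ (Dp n) = Ed n v := fun n => hφψ _
  -- rearrangement helper
  have swapL : ∀ (T : Module.End ℂ M) (n : ℤ),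
      (EL 0 * T - T * EL 0 = (n : ℂ) • T) → T * EL 0 = EL 0 * T - (n : ℂ) • T := by
    intro T n h
    rw [← h]
    abel
  -- commutation hypotheses for each family
  have hTLL : ∀ n : ℤ, EL n * EL 0 = EL 0 * EL n - (n : ℂ) • EL n := by
    intro n
    apply swapL
    have h := hLL 0 n
    simpa using h
  have hTLa : ∀ n : ℤ, Ea n * EL 0 = EL 0 * Ea n - (n : ℂ) • Ea n := by
    intro n
    apply swapL
    have h := hLa 0 n
    simpa using h
  have hTLb : ∀ n : ℤ, Eb n * EL 0 = EL 0 * Eb n - (n : ℂ) • Eb n := by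
    intro n
    apply swapL
    have h := hLb 0 n
    simpa using h
  have hTLc : ∀ n : ℤ, Ec n * EL 0 = EL 0 * Ec n - (n : ℂ) • Ec n := by
    intro n
    apply swapL
    have h := hLc 0 n
    simpa using h
  have hTLd : ∀ n : ℤ, Ed n * EL 0 = EL 0 * Ed n - (n : ℂ) • Ed n := by
    intro n
    apply swapL
    have h := hLd 0 n
    simpa using h
  have hTAL : ∀ n : ℤ, EL n * Ea 0 = Ea 0 * EL n := by
    intro n
    have h := hLa n 0
    simp only [Int.cast_zero, zero_smul, add_zero] at h
    exact sub_eq_zero.mp h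
  have hTAa : ∀ n : ℤ, Ea n * Ea 0 = Ea 0 * Ea n := by
    intro n
    have h := haa n 0
    exact sub_eq_zero.mp h
  have hTAc : ∀ n : ℤ, Ec n * Ea 0 = Ea 0 * Ec n := by
    intro n
    have h := hac 0 n
    exact (sub_eq_zero.mp h).symm
  have hTAb : ∀ n : ℤ, Eb n * Ea 0 = Ea 0 * Eb n + (-Ec n) := by
    intro n
    have h := hab 0 n
    rw [zero_add] at h
    rw [← h]
    abel
  have hTAd : ∀ n : ℤ, Ed n * Ea 0 = Ea 0 * Ed n + Ea n := by
    intro n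
    have h := hda n 0
    rw [add_zero] at h
    rw [← h]
    abel
  have hTLcneg : ∀ n : ℤ, (-Ec n) * EL 0 = EL 0 * (-Ec n) - (n : ℂ) • (-Ec n) := by
    intro n
    rw [neg_mul, mul_neg, smul_neg, hTLc n]
    abel
  have hTAcneg : ∀ n : ℤ, (-Ec n) * Ea 0 = Ea 0 * (-Ec n) := by
    intro n
    rw [neg_mul, mul_neg, hTAc n]
  -- action formulas
  have fl : ∀ (n : ℤ) p, EL n (φ p) = φ (sg (n:ℂ) p * Pp n) := fun n =>
    template1 (EL 0) (Ea 0) v hc (EL n) (n:ℂ) (Pp n) (htP n) (hTLL n) (hTAL n)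
  have fa : ∀ (n : ℤ) p, Ea n (φ p) = φ (sg (n:ℂ) p * Ap n) := fun n =>
    template1 (EL 0) (Ea 0) v hc (Ea n) (n:ℂ) (Ap n) (htA n) (hTLa n) (hTAa n)
  have fc : ∀ (n : ℤ) p, Ec n (φ p) = φ (sg (n:ℂ) p * Cp n) := fun n =>
    template1 (EL 0) (Ea 0) v hc (Ec n) (n:ℂ) (Cp n) (htC n) (hTLc n) (hTAc n)
  have fb : ∀ (n : ℤ) p, Eb n (φ p)
      = φ (sg (n:ℂ) p * Bp n + MvPolynomial.pderiv 1 (sg (n:ℂ) p) * (-(Cp n))) := fun n =>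
    template2 (EL 0) (Ea 0) v hc (Eb n) (-Ec n) (n:ℂ) (Bp n) (-(Cp n)) (htB n)
      (by rw [map_neg, htC n]; rfl) (hTLb n) (hTAb n) (hTLcneg n) (hTAcneg n)
  have fd : ∀ (n : ℤ) p, Ed n (φ p)
      = φ (sg (n:ℂ) p * Dp n + MvPolynomial.pderiv 1 (sg (n:ℂ) p) * Ap n) := fun n =>
    template2 (EL 0) (Ea 0) v hc (Ed n) (Ea n) (n:ℂ) (Dp n) (Ap n) (htD n)
      (htA n) (hTLd n) (hTAd n) (hTLa n) (hTAa n)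
  -- bracket applied to v
  have hbrk : ∀ (P Q R : Module.End ℂ M), P * Q - Q * P = R → P (Q v) = Q (P v) + R v := by
    intro P Q R h
    have h2 := congrArg (fun f : Module.End ℂ M => f v) h
    simp only [LinearMap.sub_apply, Module.End.mul_apply] at h2
    rw [sub_eq_iff_eq_add] at h2
    rw [h2]
    abel
  -- basic symbol: Ap 0 = X 1
  have hAp0 : Ap 0 = MvPolynomial.X 1 := by
    have h : φ (MvPolynomial.X 1) = Ea 0 v := phiL_X1 (EL 0) (Ea 0) v
    rw [hApdef]
    show ψ (Ea 0 v) = MvPolynomial.X 1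
    rw [← h, hψφ]

  -- Relations in R (from brackets applied to v)
  have Rda : ∀ m n : ℤ, sg (m:ℂ) (Ap n) * Dp m + MvPolynomial.pderiv 1 (sg (m:ℂ) (Ap n)) * Ap m
      = sg (n:ℂ) (Dp m) * Ap n + Ap (m+n) := by
    intro m n
    have h := hbrk (Ed m) (Ea n) (Ea (m+n)) (hda m n)
    rw [← htA n, ← htD m, fd m (Ap n), fa n (Dp m), ← htA (m+n)] at h
    exact hinj (h.trans (map_add φ _ _).symm)
  have Raa : ∀ m n : ℤ, sg (m:ℂ) (Ap n) * Ap m = sg (n:ℂ) (Ap m) * Ap n := by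
    intro m n
    have h := hbrk (Ea m) (Ea n) 0 (haa m n)
    rw [← htA n, ← htA m, fa m (Ap n), fa n (Ap m)] at h
    simp only [LinearMap.zero_apply, add_zero] at h
    exact hinj h
  have Rac0 : ∀ k : ℤ, sg (k:ℂ) (Cp 0) * Ap k = Ap k * Cp 0 := by
    intro k
    have h := hbrk (Ea k) (Ec 0) 0 (hac k 0)
    rw [← htC 0, ← htA k, fa k (Cp 0), fc 0 (Ap k)] at h
    simp only [LinearMap.zero_apply, add_zero, Int.cast_zero, sg_zero_apply] at h
    exact hinj h
  have Rdc0 : ∀ n : ℤ, Cp n * Dp 0 + MvPolynomial.pderiv 1 (Cp n) * MvPolynomial.X 1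
      = sg (n:ℂ) (Dp 0) * Cp n := by
    intro n
    have h := hbrk (Ed 0) (Ec n) 0 (hdc 0 n)
    rw [← htC n, ← htD 0, fd 0 (Cp n), fc n (Dp 0)] at h
    simp only [LinearMap.zero_apply, add_zero, Int.cast_zero, sg_zero_apply, hAp0] at h
    exact hinj h
  have Rab0 : ∀ m : ℤ, sg (m:ℂ) (Bp 0) * Ap m
      = (Ap m * Bp 0 + MvPolynomial.pderiv 1 (Ap m) * (-(Cp 0))) + Cp m := by
    intro m
    have h0 := hab m 0
    rw [add_zero] at h0
    have h := hbrk (Ea m) (Eb 0) (Ec m) h0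
    rw [← htB 0, ← htA m, fa m (Bp 0), fb 0 (Ap m), ← htC m] at h
    simp only [Int.cast_zero, sg_zero_apply] at h
    exact hinj (h.trans (map_add φ _ _).symm)
  -- transport to (ℂ[X])[X]
  have tRda : ∀ m n : ℤ, Sh (m:ℂ) (Theta (Ap n)) * Theta (Dp m)
      + derivative (Sh (m:ℂ) (Theta (Ap n))) * Theta (Ap m)
      = Sh (n:ℂ) (Theta (Dp m)) * Theta (Ap n) + Theta (Ap (m+n)) := by
    intro m n
    have h := congrArg Theta (Rda m n)
    simpa only [map_add, map_mul, Theta_sg, Theta_pderiv] using h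
  have tRaa : ∀ m n : ℤ, Sh (m:ℂ) (Theta (Ap n)) * Theta (Ap m)
      = Sh (n:ℂ) (Theta (Ap m)) * Theta (Ap n) := by
    intro m n
    have h := congrArg Theta (Raa m n)
    simpa only [map_mul, Theta_sg] using h
  have tRac0 : ∀ k : ℤ, Sh (k:ℂ) (Theta (Cp 0)) * Theta (Ap k) = Theta (Ap k) * Theta (Cp 0) := by
    intro k
    have h := congrArg Theta (Rac0 k)
    simpa only [map_mul, Theta_sg] using h
  have tRdc0 : ∀ n : ℤ, Theta (Cp n) * Theta (Dp 0) + derivative (Theta (Cp n)) * X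
      = Sh (n:ℂ) (Theta (Dp 0)) * Theta (Cp n) := by
    intro n
    have h := congrArg Theta (Rdc0 n)
    simpa only [map_add, map_mul, Theta_sg, Theta_pderiv, Theta_X1] using h
  have tRab0 : ∀ m : ℤ, Sh (m:ℂ) (Theta (Bp 0)) * Theta (Ap m)
      = (Theta (Ap m) * Theta (Bp 0) + derivative (Theta (Ap m)) * (-(Theta (Cp 0))))
        + Theta (Cp m) := by
    intro m
    have h := congrArg Theta (Rab0 m)
    simpa only [map_add, map_mul, map_neg, Theta_sg, Theta_pderiv] using h
  -- Step 1 : Ap n ≠ 0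
  have hAne : ∀ n : ℤ, Ap n ≠ 0 := by
    intro n hn0
    have h := Rda (-n) n
    rw [hn0, neg_add_cancel, hAp0] at h
    simp only [map_zero, zero_mul, mul_zero, add_zero, zero_add] at h
    exact absurd h.symm (MvPolynomial.X_ne_zero _)
  have hTAne : ∀ n : ℤ, Theta (Ap n) ≠ 0 := fun n h =>
    hAne n (Theta.injective (by rw [h, map_zero]))
  -- Step 2 : Euler equation and monomial structure
  have heuler : ∀ n : ℤ, Theta (Ap n) * ((Sh (n:ℂ) (Theta (Dp 0)) - Theta (Dp 0)) + 1)
      = X * derivative (Theta (Ap n)) := by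
    intro n
    have h := tRda 0 n
    rw [show ((0:ℤ):ℂ) = 0 from Int.cast_zero, zero_add] at h
    rw [Sh_zero_apply] at h
    rw [show Theta (Ap 0) = X by rw [hAp0, Theta_X1]] at h
    linear_combination -h
  have happ := fun n : ℤ => monomial_of_euler (Theta (Ap n))
    (Sh (n:ℂ) (Theta (Dp 0)) - Theta (Dp 0)) (hTAne n) (heuler n)
  choose f aS haSne hTAeq hfG using happ
  -- cocycle for f
  have hfadd : ∀ m n : ℤ, f (m+n) + 1 = f m + f n := by
    intro m n
    have h1 := hfG (m+n)
    have h2 := hfG m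
    have h3 := hfG n
    have hSh : Sh ((m+n : ℤ):ℂ) (Theta (Dp 0)) - Theta (Dp 0)
        = (Sh (m:ℂ) (Theta (Dp 0)) - Theta (Dp 0))
          + Sh (m:ℂ) (Sh (n:ℂ) (Theta (Dp 0)) - Theta (Dp 0)) := by
      rw [map_sub, Sh_Sh]
      push_cast
      ring
    have h4 : Sh (m:ℂ) (Sh (n:ℂ) (Theta (Dp 0)) - Theta (Dp 0)) = C ((f n : ℂ[X])) - 1 := by
      rw [show Sh (n:ℂ) (Theta (Dp 0)) - Theta (Dp 0) = C ((f n : ℂ[X])) - 1 by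
        linear_combination h3]
      rw [map_sub, Sh_C, map_one, map_natCast]
    have h5 : (C ((f (m+n) : ℂ[X])) : Polynomial (Polynomial ℂ)) + 1
        = C ((f m : ℂ[X])) + C ((f n : ℂ[X])) := by
      linear_combination -h1 + h2 + h4 + hSh
    have h6 := congrArg (fun q : Polynomial (Polynomial ℂ) => q.coeff 0) h5
    simp only [coeff_add, coeff_C, coeff_one, if_true] at h6
    exact_mod_cast h6
  have hf0 : f 0 = 1 := by
    have := hfadd 0 0
    simp only [add_zero] at this
    omega
  have hlin : ∀ n : ℤ, (f n : ℤ) = 1 + n * ((f 1 : ℤ) - 1) := by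
    intro n
    induction n using Int.induction_on with
    | zero => rw [hf0]; ring
    | succ k ih =>
        have hc' := hfadd k 1
        have hc2 : (f (k+1) : ℤ) + 1 = (f k : ℤ) + (f 1 : ℤ) := by exact_mod_cast hc'
        linear_combination hc2 + ih
    | pred k ih =>
        have hc' := hfadd (-(k:ℤ)-1) 1
        rw [show (-(k:ℤ)-1) + 1 = -(k:ℤ) by ring] at hc'
        have hc2 : (f (-(k:ℤ)) : ℤ) + 1 = (f (-(k:ℤ)-1) : ℤ) + (f 1 : ℤ) := by exact_mod_cast hc'
        linear_combination ih - hc2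
  have hfall : ∀ n : ℤ, f n = 1 := by
    have hf1 : (f 1 : ℤ) = 1 := by
      have h2 := hlin 2
      have hm2 := hlin (-2)
      have hp2 : (0:ℤ) ≤ (f 2 : ℤ) := Int.natCast_nonneg _
      have hpm2 : (0:ℤ) ≤ (f (-2) : ℤ) := Int.natCast_nonneg _
      omega
    intro n
    have h := hlin n
    rw [show ((f 1 : ℤ) - 1) = 0 by omega] at h
    simp only [mul_zero, add_zero] at h
    omega
  have hShTD : ∀ n : ℤ, Sh (n:ℂ) (Theta (Dp 0)) = Theta (Dp 0) := by
    intro n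
    have h := hfG n
    rw [hfall n] at h
    have h2 : (C (((1:ℕ) : ℂ[X])) : Polynomial (Polynomial ℂ)) = 1 := by
      rw [Nat.cast_one, map_one]
    linear_combination h + h2
  have hTAX : ∀ n : ℤ, Theta (Ap n) = C (aS n) * X := by
    intro n
    have h := hTAeq n
    rw [hfall n, pow_one] at h
    exact h

  -- Step 4 : each C_n is free of the second variable
  have hdTC : ∀ n : ℤ, derivative (Theta (Cp n)) = 0 := by
    intro n
    have h := tRdc0 n
    rw [hShTD n] at h
    have h2 : derivative (Theta (Cp n)) * X = 0 := by linear_combination h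
    rcases mul_eq_zero.mp h2 with h3 | h3
    · exact h3
    · exact absurd h3 X_ne_zero
  have hTCC : ∀ n : ℤ, Theta (Cp n) = C ((Theta (Cp n)).coeff 0) := fun n =>
    eq_C_of_natDegree_eq_zero (natDegree_eq_zero_of_derivative_eq_zero (hdTC n))
  -- Step 5 : cc m = aS m * cc 0
  have hacc : ∀ m : ℤ, aS m * (Theta (Cp 0)).coeff 0 = (Theta (Cp m)).coeff 0 := by
    intro m
    have h := tRab0 m
    rw [hTAX m] at h
    rw [show derivative (C (aS m) * X) = C (aS m) by
      rw [derivative_mul, derivative_C, derivative_X]; ring] at h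
    rw [hTCC 0, hTCC m] at h
    have h3 : (Sh (m:ℂ) (Theta (Bp 0)) * C (aS m) - C (aS m) * Theta (Bp 0)) * X
        + C (aS m * (Theta (Cp 0)).coeff 0) = C ((Theta (Cp m)).coeff 0) := by
      rw [map_mul]
      linear_combination h
    have h4 := congrArg (fun q : Polynomial (Polynomial ℂ) => q.coeff 0) h3
    simpa using h4
  -- Step 6 : cc 0 ≠ 0 via simplicity
  have hcc0ne : (Theta (Cp 0)).coeff 0 ≠ 0 := by
    intro h00
    -- then all C_m vanish
    have hCz : ∀ m : ℤ, Cp m = 0 := by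
      intro m
      have h1 : Theta (Cp m) = 0 := by
        rw [hTCC m, ← hacc m, h00, mul_zero, map_zero]
      have := congrArg Theta.symm h1
      rwa [AlgEquiv.symm_apply_apply, map_zero] at this
    -- the X1-multiples submodule
    set N : Submodule ℂ M :=
      Submodule.map φ ((Ideal.span {(MvPolynomial.X 1 : MvPolynomial (Fin 2) ℂ)}).restrictScalars ℂ)
      with hNdef
    have hmemN : ∀ x, x ∈ N ↔ ∃ q, φ (q * MvPolynomial.X 1) = x := by
      intro x
      constructor
      · rintro ⟨p, hp, rfl⟩
        have hp' : p ∈ Ideal.span {(MvPolynomial.X 1 : MvPolynomial (Fin 2) ℂ)} := hp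
        rw [Ideal.mem_span_singleton'] at hp'
        obtain ⟨q, hq⟩ := hp'
        exact ⟨q, by rw [hq]⟩
      · rintro ⟨q, rfl⟩
        exact ⟨q * MvPolynomial.X 1,
          by exact Ideal.mem_span_singleton'.mpr ⟨q, rfl⟩, rfl⟩
    -- X1-factorization of the a-symbols
    have hApfac : ∀ n : ℤ, Ap n = Theta.symm (C (aS n)) * MvPolynomial.X 1 := by
      intro n
      apply Theta.injective
      rw [map_mul, AlgEquiv.apply_symm_apply, Theta_X1, hTAX n]
    have hNinv : ∀ (n : ℤ), ∀ x ∈ N, EL n x ∈ N ∧ Ea n x ∈ N ∧ Eb n x ∈ N ∧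
        Ec n x ∈ N ∧ Ed n x ∈ N := by
      intro n x hx
      rw [hmemN] at hx
      obtain ⟨q, rfl⟩ := hx
      have hsgfac : sg (n:ℂ) (q * MvPolynomial.X 1) = sg (n:ℂ) q * MvPolynomial.X 1 := by
        rw [map_mul, sg_X1]
      refine ⟨?_, ?_, ?_, ?_, ?_⟩
      · rw [hmemN]
        exact ⟨sg (n:ℂ) q * Pp n, by rw [fl n, hsgfac]; ring_nf⟩
      · rw [hmemN]
        exact ⟨sg (n:ℂ) q * Ap n, by rw [fa n, hsgfac]; ring_nf⟩
      · rw [hmemN]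
        refine ⟨sg (n:ℂ) q * Bp n, ?_⟩
        rw [fb n, hsgfac, hCz n, neg_zero, mul_zero, add_zero]
        ring_nf
      · rw [hmemN]
        refine ⟨0, ?_⟩
        rw [fc n, hCz n, mul_zero, map_zero, zero_mul, map_zero]
      · rw [hmemN]
        refine ⟨sg (n:ℂ) q * Dp n
            + MvPolynomial.pderiv 1 (sg (n:ℂ) (q * MvPolynomial.X 1)) * Theta.symm (C (aS n)), ?_⟩
        rw [fd n, hsgfac, hApfac n]
        congr 1
        ring
    rcases hsimple N hNinv with hbot | htop
    · have hX1 : φ (MvPolynomial.X 1) ∈ N := by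
        rw [hmemN]
        exact ⟨1, by rw [one_mul]⟩
      rw [hbot, Submodule.mem_bot] at hX1
      have : (MvPolynomial.X 1 : MvPolynomial (Fin 2) ℂ) = 0 := hinj (by rw [hX1, map_zero])
      exact MvPolynomial.X_ne_zero _ this
    · have hv : v ∈ N := htop ▸ Submodule.mem_top
      rw [hmemN] at hv
      obtain ⟨q, hq⟩ := hv
      have h1 : q * MvPolynomial.X 1 = 1 := by
        apply hinj
        rw [hq, phiL_one]
      have h2 := congrArg (MvPolynomial.eval (fun _ => (0:ℂ))) h1
      simp only [map_mul, MvPolynomial.eval_X, mul_zero, map_one] at h2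
      exact zero_ne_one h2

  -- Step 7 : the aS are constants
  have hTau : ∀ m n : ℤ, Tau (m:ℂ) (aS n) * aS m = Tau (n:ℂ) (aS m) * aS n := by
    intro m n
    have h := tRaa m n
    rw [hTAX m, hTAX n, map_mul, Sh_C, Sh_X, map_mul, Sh_C, Sh_X] at h
    have h2 : (C (Tau (m:ℂ) (aS n) * aS m) : Polynomial (Polynomial ℂ)) * (X * X)
        = C (Tau (n:ℂ) (aS m) * aS n) * (X * X) := by
      rw [map_mul, map_mul]
      linear_combination h
    exact C_injective (mul_right_cancel₀ (mul_ne_zero X_ne_zero X_ne_zero) h2)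
  have hadeg := natDegree_eq_zero_of_commrel aS haSne hTau
  set α : ℤ → ℂ := fun n => (aS n).coeff 0 with hαdef
  have haC : ∀ n, aS n = Polynomial.C (α n) := fun n => eq_C_of_natDegree_eq_zero (hadeg n)
  have hαne : ∀ n, α n ≠ 0 := by
    intro n h0
    exact haSne n (by rw [haC n, h0, map_zero])
  -- C₀ is a constant polynomial
  have hTauc : ∀ k : ℤ, Tau (k:ℂ) ((Theta (Cp 0)).coeff 0) = (Theta (Cp 0)).coeff 0 := by
    intro k
    have h := tRac0 k
    rw [hTAX k, hTCC 0, Sh_C] at h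
    have h2 : (C (Tau (k:ℂ) ((Theta (Cp 0)).coeff 0) * aS k) : Polynomial (Polynomial ℂ)) * X
        = C ((Theta (Cp 0)).coeff 0 * aS k) * X := by
      rw [map_mul, map_mul]
      linear_combination h
    exact mul_right_cancel₀ (haSne k) (C_injective (mul_right_cancel₀ X_ne_zero h2))
  obtain ⟨γ, hγ⟩ := exists_C_of_periodic ((Theta (Cp 0)).coeff 0) (by
    have := hTauc 1
    rwa [Int.cast_one] at this)
  have hγne : γ ≠ 0 := fun h0 => hcc0ne (by rw [hγ, h0, map_zero])
  have hCpC : ∀ m : ℤ, Cp m = MvPolynomial.C (α m * γ) := by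
    intro m
    apply Theta.injective
    rw [Theta_C, hTCC m, ← hacc m, haC m, hγ, ← map_mul]
  -- Step 8 : multiplicativity
  have hTAconst : ∀ n : ℤ, Theta (Ap n) = C (Polynomial.C (α n)) * X := by
    intro n
    rw [hTAX n, haC n]
  have hα0 : α 0 = 1 := by
    have h := hTAconst 0
    rw [show Theta (Ap 0) = X by rw [hAp0, Theta_X1]] at h
    have h2 : (C (Polynomial.C (α 0)) : Polynomial (Polynomial ℂ)) * X = 1 * X := by
      rw [one_mul, ← h]
    have h3 := mul_right_cancel₀ X_ne_zero h2
    have h4 : (C (Polynomial.C (α 0)) : Polynomial (Polynomial ℂ)) = C (Polynomial.C 1) := by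
      rw [h3, Polynomial.C_1, map_one]
    exact C_injective (C_injective h4)
  obtain ⟨w, hwspec⟩ : ∃ w : ℤ → ℤ → ℂ, ∀ m n, w m n = α (m+n) / α n - α m :=
    ⟨fun m n => α (m+n) / α n - α m, fun _ _ => rfl⟩
  have hw : ∀ m n : ℤ, Theta (Dp m) - Sh (n:ℂ) (Theta (Dp m))
      = C (Polynomial.C (w m n)) := by
    intro m n
    have h := tRda m n
    rw [hTAconst n, hTAconst m, hTAconst (m+n)] at h
    rw [map_mul, Sh_C, Sh_X, Tau_C] at h
    rw [show derivative ((C (Polynomial.C (α n)) : Polynomial (Polynomial ℂ)) * X)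
      = C (Polynomial.C (α n)) by rw [derivative_mul, derivative_C, derivative_X]; ring] at h
    have e1 : (C (Polynomial.C (α n)) : Polynomial (Polynomial ℂ)) * C (Polynomial.C (α m))
        = C (Polynomial.C (α n * α m)) := by
      rw [← map_mul, ← map_mul]
    have e2 : (C (Polynomial.C (α n)) : Polynomial (Polynomial ℂ)) * C (Polynomial.C (w m n))
        = C (Polynomial.C (α (m+n) - α n * α m)) := by
      have hx : α n * w m n = α (m+n) - α n * α m := by
        rw [hwspec]
        field_simp [hαne n]
      rw [← map_mul, ← map_mul, hx]
    have e3 : (C (Polynomial.C (α (m+n) - α n * α m)) : Polynomial (Polynomial ℂ))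
        = C (Polynomial.C (α (m+n))) - C (Polynomial.C (α n * α m)) := by
      rw [map_sub, map_sub]
    have hkey : (C (Polynomial.C (α n)) : Polynomial (Polynomial ℂ))
        * ((Theta (Dp m) - Sh (n:ℂ) (Theta (Dp m))) - C (Polynomial.C (w m n))) * X = 0 := by
      linear_combination h - X * e1 - X * e2 - X * e3
    rcases mul_eq_zero.mp hkey with h5 | h5
    · rcases mul_eq_zero.mp h5 with h6 | h6
      · exfalso
        apply hαne n
        have : (Polynomial.C (α n) : ℂ[X]) = 0 := C_injective (by rw [h6, map_zero])
        exact C_injective (by rw [this, map_zero])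
      · linear_combination h6
    · exact absurd h5 X_ne_zero
  have hw0 : ∀ m : ℤ, w m 0 = 0 := by
    intro m
    have h := hw m 0
    rw [Int.cast_zero, Sh_zero_apply, sub_self] at h
    have h2 : (Polynomial.C (w m 0) : ℂ[X]) = 0 := C_injective (by rw [← h, map_zero])
    exact C_injective (by rw [h2, map_zero])
  have hwadd : ∀ m n k : ℤ, w m (n+k) = w m n + w m k := by
    intro m n k
    have h1 := hw m (n+k)
    have h2 := hw m n
    have h3 := hw m k
    have hSh2 : Theta (Dp m) - Sh ((n+k : ℤ):ℂ) (Theta (Dp m))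
        = (Theta (Dp m) - Sh (n:ℂ) (Theta (Dp m)))
          + Sh (n:ℂ) (Theta (Dp m) - Sh (k:ℂ) (Theta (Dp m))) := by
      rw [map_sub, Sh_Sh]
      push_cast
      ring
    have h4 : Sh (n:ℂ) (Theta (Dp m) - Sh (k:ℂ) (Theta (Dp m)))
        = C (Polynomial.C (w m k)) := by
      rw [h3, Sh_C, Tau_C]
    have h5 : (C (Polynomial.C (w m (n+k))) : Polynomial (Polynomial ℂ))
        = C (Polynomial.C (w m n)) + C (Polynomial.C (w m k)) := by
      linear_combination -h1 + h2 + h4 + hSh2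
    rw [← map_add, ← map_add] at h5
    exact C_injective (C_injective h5)
  have hwlin : ∀ m n : ℤ, w m n = (n:ℂ) * w m 1 := by
    intro m n
    induction n using Int.induction_on with
    | zero => rw [hw0 m]; push_cast; ring
    | succ k ih =>
        have h := hwadd m k 1
        rw [h, ih]
        push_cast
        ring
    | pred k ih =>
        have h := hwadd m (-(k:ℤ)-1) 1
        rw [show (-(k:ℤ)-1) + 1 = -(k:ℤ) by ring] at h
        have h2 : w m (-(k:ℤ)-1) = w m (-(k:ℤ)) - w m 1 := by linear_combination -h
        rw [h2, ih]
        push_cast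
        ring
  have heq : ∀ m n : ℤ, α (m+n) = α n * α m + (n:ℂ) * α n * (w m 1) := by
    intro m n
    have h := hwlin m n
    rw [hwspec m n] at h
    have h3 : α (m+n) / α n = α m + (n:ℂ) * w m 1 := by linear_combination h
    have h4 := (div_eq_iff (hαne n)).mp h3
    linear_combination h4
  have hzpow := mult_structure α (fun m => w m 1) hαne heq
  -- final assembly
  have hinvFun : ∀ x, Function.invFun (fun p : MvPolynomial (Fin 2) ℂ => evUB (EL 0) (Ea 0) p v) x
      = ψ x := by
    intro x
    have h1 : (fun p : MvPolynomial (Fin 2) ℂ => evUB (EL 0) (Ea 0) p v)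
        (Function.invFun (fun p : MvPolynomial (Fin 2) ℂ => evUB (EL 0) (Ea 0) p v) x) = x :=
      Function.invFun_eq (hfree.surjective x)
    have h2 : (fun p : MvPolynomial (Fin 2) ℂ => evUB (EL 0) (Ea 0) p v) (ψ x) = x := hφψ x
    exact hfree.injective (h1.trans h2.symm)
  refine ⟨fun n => ⟨α n * γ, ?_⟩, ⟨α 1, hαne 1, fun n => ?_⟩, ?_⟩
  · rw [hinvFun]
    exact hCpC n
  · rw [hinvFun, hinvFun]
    show Cp n = (α 1) ^ n • Cp 0
    rw [hCpC n, hCpC 0, hα0, one_mul, hzpow n, MvPolynomial.smul_eq_C_mul, ← map_mul]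
  · rw [hinvFun]
    show Cp 0 ≠ 0
    rw [hCpC 0, hα0, one_mul]
    intro h0
    exact hγne (by simpa using congrArg (MvPolynomial.coeff 0) h0)


end
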